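/- Sharp two-sided bounds for the relative momentum (inequality (2.65)): For all p, q ∈ ℝ³, with p⁰ := √(1+|p|²), q⁰ := √(1+|q|²), and g := √(2(p⁰q⁰ − p·q − 1)), one has √(|p−q|² + |p×q|²)/√(p⁰q⁰) ≤ g ≤ |p−q|. -/

import Mathlib

open scoped InnerProductSpace

noncomputable section

/-- Momentum space ℝ³ with the Euclidean structure. -/
abbrev E3 : Type := EuclideanSpace ℝ (Fin 3)

/-- The relativistic energy `p⁰ = √(1+|p|²)`. -/
def en (p : E3) : ℝ := Real.sqrt (1 + ‖p‖ ^ 2)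

/-- The relative momentum `g(p,q) = √(2(p⁰q⁰ − p·q − 1))`. -/
def relg (p q : E3) : ℝ := Real.sqrt (2 * (en p * en q - ⟪p, q⟫_ℝ - 1))

/-- `s = g² + 4`. -/
def srel (p q : E3) : ℝ := relg p q ^ 2 + 4

/-- The post-collisional momentum `p'` in the center-of-momentum parametrization. -/
def pPost (p q ω : E3) : E3 :=
  (2 : ℝ)⁻¹ • (p + q) + (relg p q / 2) •
    (ω + (((en p + en q) / Real.sqrt (srel p q) - 1) *
      (⟪p + q, ω⟫_ℝ / ‖p + q‖ ^ 2)) • (p + q))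

/-- The post-collisional momentum `q' = p + q − p'`. -/
def qPost (p q ω : E3) : E3 := p + q - pPost p q ω

/-- The cosine of the scattering angle. -/
def cosTheta (p q ω : E3) : ℝ :=
  (-((en p - en q) * (en (pPost p q ω) - en (qPost p q ω))) +
    ⟪p - q, pPost p q ω - qPost p q ω⟫_ℝ) / relg p q ^ 2

/-- The cross product on ℝ³ (transported to the Euclidean space structure). -/
def cross3 (p q : E3) : E3 :=
  (EuclideanSpace.equiv (Fin 3) ℝ).symm
    (crossProduct ((EuclideanSpace.equiv (Fin 3) ℝ) p) ((EuclideanSpace.equiv (Fin 3) ℝ) q))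



theorem cross3_norm_sq' (p q : E3) : ‖cross3 p q‖^2 = ‖p‖^2 * ‖q‖^2 - ⟪p,q⟫_ℝ^2 := by
  have h := cross_dot_cross ((EuclideanSpace.equiv (Fin 3) ℝ) p) ((EuclideanSpace.equiv (Fin 3) ℝ) q)
    ((EuclideanSpace.equiv (Fin 3) ℝ) p) ((EuclideanSpace.equiv (Fin 3) ℝ) q)
  have hn : ∀ x : E3, ‖x‖^2 = ⟪x,x⟫_ℝ := fun x => (real_inner_self_eq_norm_sq x).symm
  simp only [hn, PiLp.inner_apply, RCLike.inner_apply, conj_trivial]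
  simp only [cross3, dotProduct, PiLp.continuousLinearEquiv_apply,
    PiLp.continuousLinearEquiv_symm_apply, PiLp.coe_continuousLinearEquiv, PiLp.coe_symm_continuousLinearEquiv, WithLp.ofLp_toLp] at h ⊢
  rw [sq]
  rw [show (∑ x : Fin 3, q x * p x) = ∑ x : Fin 3, p x * q x from
    Finset.sum_congr rfl fun i _ => mul_comm _ _] at h ⊢
  exact h

/-- **Sharp two-sided bounds for the relative momentum** (inequality (2.65)). -/
theorem relg_two_sided_bounds (p q : E3) :
    Real.sqrt (‖p - q‖ ^ 2 + ‖cross3 p q‖ ^ 2) / Real.sqrt (en p * en q) ≤ relg p q ∧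
      relg p q ≤ ‖p - q‖ := by
  set a := en p * en q with ha
  set b := ⟪p, q⟫_ℝ with hb
  have hep : en p ^ 2 = 1 + ‖p‖ ^ 2 := Real.sq_sqrt (by positivity)
  have heq : en q ^ 2 = 1 + ‖q‖ ^ 2 := Real.sq_sqrt (by positivity)
  have hep1 : 1 ≤ en p := Real.one_le_sqrt.2 (by nlinarith [sq_nonneg ‖p‖])
  have heq1 : 1 ≤ en q := Real.one_le_sqrt.2 (by nlinarith [sq_nonneg ‖q‖])
  have ha1 : 1 ≤ a := one_le_mul_of_one_le_of_one_le hep1 heq1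
  have hcs : b ≤ ‖p‖ * ‖q‖ := real_inner_le_norm p q
  have hab : b + 1 ≤ a := by
    have h2 : (‖p‖ * ‖q‖ + 1) ^ 2 ≤ a ^ 2 := by
      have : a ^ 2 = (1 + ‖p‖^2) * (1 + ‖q‖^2) := by rw [ha, mul_pow, hep, heq]
      nlinarith [sq_nonneg (‖p‖ - ‖q‖)]
    nlinarith [norm_nonneg p, norm_nonneg q]
  have hg0 : 0 ≤ 2 * (a - b - 1) := by linarith
  have hg2 : relg p q ^ 2 = 2 * (a - b - 1) := Real.sq_sqrt hg0
  have hgnn : 0 ≤ relg p q := Real.sqrt_nonneg _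
  have hsub : ‖p - q‖ ^ 2 = ‖p‖^2 - 2*b + ‖q‖^2 := by
    rw [norm_sub_sq_real]
  constructor
  · rw [div_le_iff₀ (by positivity)]
    rw [show relg p q * Real.sqrt a = Real.sqrt (relg p q ^2 * a) by
      rw [Real.sqrt_mul (sq_nonneg _), Real.sqrt_sq hgnn]]
    apply Real.sqrt_le_sqrt
    rw [cross3_norm_sq', hsub, hg2]
    have ha2 : a ^ 2 = (1 + ‖p‖^2) * (1 + ‖q‖^2) := by rw [ha, mul_pow, hep, heq]
    nlinarith [sq_nonneg (a - b - 1)]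
  · rw [show ‖p - q‖ = Real.sqrt (‖p - q‖^2) from (Real.sqrt_sq (norm_nonneg _)).symm]
    apply Real.sqrt_le_sqrt
    rw [hsub]
    nlinarith [sq_nonneg (en p - en q)]
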